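/- Let λ ∈ (0,1) and θ ∈ (1, ∞). Then the function f : ℝ → ℝ defined by f(c) = (c/((2θ−1+2cθ)(2−2θ−c(2θ−1))))^((1−θ)/(θ−1/2)) − (2θ−1+2cθ)²/(1−λ) has exactly one zero in the open interval ((1−θ)/θ, 0); i.e., there exists a unique c ∈ ((1−θ)/θ, 0) with f(c) = 0. -/

import Mathlib

open Real

noncomputable def Gaux (θ : ℝ) : ℝ → ℝ := fun x =>
  ((1-θ)/(θ-1/2)) * Real.log (-x) - ((1-θ)/(θ-1/2)+2) * Real.log (2*θ-1+2*x*θ)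
    - ((1-θ)/(θ-1/2)) * Real.log (-(2-2*θ-x*(2*θ-1)))

lemma Gaux_hasDerivAt (θ : ℝ) (hθ : 1 < θ) (x : ℝ) (hx1 : (1-θ)/θ ≤ x) (hx2 : x < 0) :
    HasDerivAt (Gaux θ)
      (((1-θ)/(θ-1/2)) * (-1 / -x) - ((1-θ)/(θ-1/2)+2) * (2*θ / (2*θ-1+2*x*θ))
        - ((1-θ)/(θ-1/2)) * ((2*θ-1) / -(2-2*θ-x*(2*θ-1)))) x := by
  have hθ0 : (0:ℝ) < θ := by linarith
  have hθx : 1 - θ ≤ θ * x := by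
    have := (div_le_iff₀ hθ0).mp hx1
    linarith [this]
  have ha : 0 < 2*θ-1+2*x*θ := by nlinarith
  have hb : 2-2*θ-x*(2*θ-1) < 0 := by nlinarith
  have h1 : HasDerivAt (fun y : ℝ => -y) (-1) x := by
    exact hasDerivAt_neg x
  have h1' : HasDerivAt (fun y : ℝ => Real.log (-y)) (-1 / -x) x :=
    h1.log (by simpa using hx2.ne)
  have hA : HasDerivAt (fun y : ℝ => 2*θ-1+2*y*θ) (2*θ) x := by
    have e : (fun y : ℝ => 2*θ-1+2*y*θ) = fun y => 2*θ-1 + (2*θ)*y := by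
      funext y; ring
    rw [e]
    simpa using ((hasDerivAt_id x).const_mul (2*θ)).const_add (2*θ-1)
  have hA' : HasDerivAt (fun y : ℝ => Real.log (2*θ-1+2*y*θ)) (2*θ / (2*θ-1+2*x*θ)) x :=
    hA.log ha.ne'
  have hB : HasDerivAt (fun y : ℝ => -(2-2*θ-y*(2*θ-1))) (2*θ-1) x := by
    have e : (fun y : ℝ => -(2-2*θ-y*(2*θ-1))) = fun y => -(2-2*θ) + (2*θ-1)*y := by
      funext y; ring
    rw [e]
    simpa using ((hasDerivAt_id x).const_mul (2*θ-1)).const_add (-(2-2*θ))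
  have hB' : HasDerivAt (fun y : ℝ => Real.log (-(2-2*θ-y*(2*θ-1))))
      ((2*θ-1) / -(2-2*θ-x*(2*θ-1))) x :=
    hB.log (neg_ne_zero.mpr hb.ne)
  exact ((h1'.const_mul _).sub (hA'.const_mul _)).sub (hB'.const_mul _)

lemma Gaux_strictMonoOn (θ : ℝ) (hθ : 1 < θ) :
    StrictMonoOn (Gaux θ) (Set.Ico ((1-θ)/θ) 0) := by
  have hθ0 : (0:ℝ) < θ := by linarith
  apply strictMonoOn_of_deriv_pos (convex_Ico _ _)
  · intro x hx
    exact (Gaux_hasDerivAt θ hθ x hx.1 hx.2).continuousAt.continuousWithinAt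
  · rw [interior_Ico]
    intro x hx
    obtain ⟨hx1, hx2⟩ := hx
    rw [(Gaux_hasDerivAt θ hθ x hx1.le hx2).deriv]
    have hθx : 1 - θ < θ * x := by
      have := (div_lt_iff₀ hθ0).mp hx1
      linarith
    have hpx : 0 < θ - 1 + θ * x := by linarith
    have ha : 0 < 2*θ-1+2*x*θ := by nlinarith
    have hb : 2-2*θ-x*(2*θ-1) < 0 := by nlinarith
    have hkey : ((1-θ)/(θ-1/2)) * (-1 / -x) - ((1-θ)/(θ-1/2)+2) * (2*θ / (2*θ-1+2*x*θ))
        - ((1-θ)/(θ-1/2)) * ((2*θ-1) / -(2-2*θ-x*(2*θ-1)))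
        = 4*(θ-1+θ*x)^2 / (x * ((2*θ-1+2*x*θ) * (2-2*θ-x*(2*θ-1)))) := by
      have h1 : x ≠ 0 := hx2.ne
      have h2 : (2*θ-1+2*x*θ) ≠ 0 := ha.ne'
      have h3 : (2-2*θ-x*(2*θ-1)) ≠ 0 := hb.ne
      have h4 : θ - 1/2 ≠ 0 := by intro h; nlinarith
      have h5 : (2*θ-1) ≠ 0 := by intro h; nlinarith
      have e : (1-θ)/(θ-1/2) = (2-2*θ)/(2*θ-1) := by rw [div_eq_div_iff h4 h5]; ring
      rw [e, eq_div_iff (mul_ne_zero h1 (mul_ne_zero h2 h3)), neg_div_neg_eq, div_neg]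
      rw [div_add' _ _ _ h5, div_mul_div_comm, div_mul_div_comm, mul_neg, div_mul_div_comm, sub_neg_eq_add,
        div_sub_div _ _ (mul_ne_zero h5 h1) (mul_ne_zero h5 h2), div_add_div _ _ (mul_ne_zero (mul_ne_zero h5 h1) (mul_ne_zero h5 h2)) (mul_ne_zero h5 h3),
        div_mul_eq_mul_div, div_eq_iff (mul_ne_zero (mul_ne_zero (mul_ne_zero h5 h1) (mul_ne_zero h5 h2)) (mul_ne_zero h5 h3))]
      ring
    rw [hkey]
    apply div_pos
    · have : (0:ℝ) < (θ-1+θ*x)^2 := by positivity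
      linarith
    · have hab : (2*θ-1+2*x*θ) * (2-2*θ-x*(2*θ-1)) < 0 := mul_neg_of_pos_of_neg ha hb
      exact mul_pos_of_neg_of_neg hx2 hab

lemma Gaux_lo (θ : ℝ) (hθ : 1 < θ) : Gaux θ ((1-θ)/θ) = 0 := by
  have hθ0 : θ ≠ 0 := by intro h; nlinarith
  have e1 : -((1-θ)/θ) = (θ-1)/θ := by ring
  have e2 : 2*θ-1+2*((1-θ)/θ)*θ = 1 := by field_simp; ring
  have e3 : -(2-2*θ-((1-θ)/θ)*(2*θ-1)) = (θ-1)/θ := by field_simp; ring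
  unfold Gaux
  rw [e1, e2, e3, Real.log_one]
  ring

lemma Gaux_root_iff (lam θ c : ℝ) (hlam1 : 0 < lam) (hlam2 : lam < 1) (hθ : 1 < θ)
    (hc1 : (1-θ)/θ < c) (hc2 : c < 0) :
    ((c / ((2*θ - 1 + 2*c*θ) * (2 - 2*θ - c*(2*θ - 1)))) ^ ((1 - θ)/(θ - 1/2))
        - (2*θ - 1 + 2*c*θ)^2 / (1 - lam) = 0)
      ↔ Gaux θ c = -Real.log (1 - lam) := by
  have hθ0 : (0:ℝ) < θ := by linarith
  have hθx : 1 - θ < θ * c := by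
    have := (div_lt_iff₀ hθ0).mp hc1
    linarith
  have ha : 0 < 2*θ-1+2*c*θ := by nlinarith
  have hb : 2-2*θ-c*(2*θ-1) < 0 := by nlinarith
  have hlamne : (1:ℝ) - lam ≠ 0 := by intro h; linarith
  have hX : 0 < c / ((2*θ - 1 + 2*c*θ) * (2 - 2*θ - c*(2*θ - 1))) :=
    div_pos_of_neg_of_neg hc2 (mul_neg_of_pos_of_neg ha hb)
  have hP : 0 < (c / ((2*θ - 1 + 2*c*θ) * (2 - 2*θ - c*(2*θ - 1)))) ^ ((1 - θ)/(θ - 1/2)) :=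
    Real.rpow_pos_of_pos hX _
  have hQ : 0 < (2*θ - 1 + 2*c*θ)^2 / (1 - lam) :=
    div_pos (pow_pos ha 2) (by linarith)
  have hlogX : Real.log (c / ((2*θ - 1 + 2*c*θ) * (2 - 2*θ - c*(2*θ - 1))))
      = Real.log (-c) - Real.log (2*θ-1+2*c*θ) - Real.log (-(2-2*θ-c*(2*θ-1))) := by
    rw [Real.log_div hc2.ne (mul_ne_zero ha.ne' hb.ne), Real.log_mul ha.ne' hb.ne,
      show Real.log c = Real.log (-c) from (Real.log_neg_eq_log c).symm,
      show Real.log (2 - 2*θ - c*(2*θ - 1)) = Real.log (-(2-2*θ-c*(2*θ-1))) from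
        (Real.log_neg_eq_log _).symm]
    ring
  have hlogQ : Real.log ((2*θ - 1 + 2*c*θ)^2 / (1 - lam))
      = 2 * Real.log (2*θ-1+2*c*θ) - Real.log (1 - lam) := by
    rw [Real.log_div (pow_ne_zero 2 ha.ne') hlamne, Real.log_pow]
    push_cast
    ring
  rw [sub_eq_zero]
  constructor
  · intro h
    have hl := congrArg Real.log h
    rw [Real.log_rpow hX, hlogX, hlogQ] at hl
    unfold Gaux
    linarith
  · intro h
    unfold Gaux at h
    apply Real.log_injOn_pos (Set.mem_Ioi.2 hP) (Set.mem_Ioi.2 hQ)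
    rw [Real.log_rpow hX, hlogX, hlogQ]
    linarith

theorem growth_optimal_f_unique_root_theta_gt_one
    (lam θ : ℝ) (hlam : lam ∈ Set.Ioo (0:ℝ) 1) (hθ : θ ∈ Set.Ioi (1:ℝ))
    (f : ℝ → ℝ)
    (hf : ∀ c : ℝ, f c =
      (c / ((2*θ - 1 + 2*c*θ) * (2 - 2*θ - c*(2*θ - 1)))) ^ ((1 - θ)/(θ - 1/2))
        - (2*θ - 1 + 2*c*θ)^2 / (1 - lam)) :
    ∃! c : ℝ, c ∈ Set.Ioo ((1 - θ)/θ) 0 ∧ f c = 0 := by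
  obtain ⟨hlam1, hlam2⟩ := hlam
  have hθ1 : (1:ℝ) < θ := hθ
  have hθ0 : (0:ℝ) < θ := by linarith
  set lo : ℝ := (1 - θ)/θ with hlo_def
  set t : ℝ := -Real.log (1 - lam) with ht_def
  set p : ℝ := (1 - θ)/(θ - 1/2) with hp_def
  have hlo_neg : lo < 0 := div_neg_of_neg_of_pos (by linarith) hθ0
  have ht : 0 < t := by
    have := Real.log_neg (by linarith : (0:ℝ) < 1 - lam) (by linarith : (1:ℝ) - lam < 1)
    simp only [ht_def]; linarith
  have hp_neg : p < 0 := div_neg_of_neg_of_pos (by linarith) (by linarith)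
  have hp2 : 0 < p + 2 := by
    have h4 : θ - 1/2 ≠ 0 := by intro h; nlinarith
    have e : p + 2 = θ/(θ - 1/2) := by
      rw [hp_def, div_add' _ _ _ h4, div_eq_div_iff h4 h4]; ring
    rw [e]; apply div_pos hθ0; linarith
  -- lower bound on Gaux
  set C₀ : ℝ := -(p+2) * Real.log (2*θ-1) - p * Real.log ((θ-1)/θ) with hC0_def
  have hlower : ∀ x, lo < x → x < 0 → p * Real.log (-x) + C₀ ≤ Gaux θ x := by
    intro x hx1 hx2
    have hθx : 1 - θ < θ * x := by
      have := (div_lt_iff₀ hθ0).mp hx1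
      linarith
    have ha : 0 < 2*θ-1+2*x*θ := by nlinarith
    have hbpos : 0 < (θ-1)/θ := div_pos (by linarith) hθ0
    have b1 : Real.log (2*θ-1+2*x*θ) ≤ Real.log (2*θ-1) :=
      Real.log_le_log ha (by nlinarith)
    have b2 : Real.log ((θ-1)/θ) ≤ Real.log (-(2-2*θ-x*(2*θ-1))) := by
      apply Real.log_le_log hbpos
      rw [div_le_iff₀ hθ0]
      nlinarith
    have m1 : (p+2) * Real.log (2*θ-1+2*x*θ) ≤ (p+2) * Real.log (2*θ-1) :=
      mul_le_mul_of_nonneg_left b1 hp2.le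
    have m2 : p * Real.log (-(2-2*θ-x*(2*θ-1))) ≤ p * Real.log ((θ-1)/θ) :=
      mul_le_mul_of_nonpos_left b2 hp_neg.le
    unfold Gaux
    rw [hC0_def]
    rw [← hp_def]
    linarith
  -- choose c₂ near 0 with Gaux θ c₂ > t
  set s : ℝ := min ((t - C₀ + 1)/p) (Real.log ((θ-1)/(2*θ))) with hs_def
  set c₂ : ℝ := -Real.exp s with hc2_def
  have hc₂0 : c₂ < 0 := by
    rw [hc2_def]; simpa using Real.exp_pos s
  have hexp_small : Real.exp s ≤ (θ-1)/(2*θ) := by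
    calc Real.exp s ≤ Real.exp (Real.log ((θ-1)/(2*θ))) :=
          Real.exp_le_exp.mpr (min_le_right _ _)
      _ = (θ-1)/(2*θ) := Real.exp_log (div_pos (by linarith) (by linarith))
  have hhalf : (θ-1)/(2*θ) < (θ-1)/θ := by
    apply div_lt_div_of_pos_left (by linarith) hθ0 (by linarith)
  have hc₂lo : lo < c₂ := by
    have e : lo = -((θ-1)/θ) := by rw [hlo_def]; ring
    rw [e, hc2_def]
    have : Real.exp s < (θ-1)/θ := lt_of_le_of_lt hexp_small hhalf
    linarith
  have hGc₂ : t < Gaux θ c₂ := by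
    have hlb := hlower c₂ hc₂lo hc₂0
    have hlog : Real.log (-c₂) = s := by
      rw [hc2_def, neg_neg, Real.log_exp]
    have hps : t - C₀ + 1 ≤ p * s := by
      have h1 : s ≤ (t - C₀ + 1)/p := min_le_left _ _
      have h2 : p * ((t - C₀ + 1)/p) ≤ p * s := mul_le_mul_of_nonpos_left h1 hp_neg.le
      rw [mul_div_cancel₀ _ hp_neg.ne] at h2
      exact h2
    rw [hlog] at hlb
    linarith
  -- IVT
  have hmono := Gaux_strictMonoOn θ hθ1
  have hcont : ContinuousOn (Gaux θ) (Set.Icc lo c₂) := by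
    intro x hx
    exact (Gaux_hasDerivAt θ hθ1 x hx.1 (lt_of_le_of_lt hx.2 hc₂0)).continuousAt.continuousWithinAt
  have hmem : t ∈ Set.Ioo (Gaux θ lo) (Gaux θ c₂) := by
    rw [Gaux_lo θ hθ1]
    exact ⟨ht, hGc₂⟩
  obtain ⟨c, hcmem, hGc⟩ := intermediate_value_Ioo hc₂lo.le hcont hmem
  have hcIoo : c ∈ Set.Ioo lo (0:ℝ) := ⟨hcmem.1, lt_trans hcmem.2 hc₂0⟩
  refine ⟨c, ⟨hcIoo, ?_⟩, ?_⟩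
  · rw [hf c]
    exact (Gaux_root_iff lam θ c hlam1 hlam2 hθ1 hcIoo.1 hcIoo.2).mpr hGc
  · rintro y ⟨hy, hfy⟩
    rw [hf y] at hfy
    have hGy : Gaux θ y = t := (Gaux_root_iff lam θ y hlam1 hlam2 hθ1 hy.1 hy.2).mp hfy
    exact hmono.injOn ⟨hy.1.le, hy.2⟩ ⟨hcIoo.1.le, hcIoo.2⟩ (hGy.trans hGc.symm)
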